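/- If G is a factor-critical simple graph with more than one vertex, then for every independent set T of G, the number of vertices in T is at most the number of neighbors of T in G, i.e., |T| ≤ |N_G(T)|. -/
import Mathlib


open Finset

namespace TB

variable {V W : Type*}

/-- A matching of `G` given as a finite set of edges: each element is an edge of `G`
and no two distinct edges share a vertex. -/
def IsMatching (G : SimpleGraph V) (M : Finset (Sym2 V)) : Prop :=
  (∀ e ∈ M, e ∈ G.edgeSet) ∧
    ∀ e ∈ M, ∀ f ∈ M, e ≠ f → ∀ v : V, v ∈ e → v ∉ f

/-- A perfect matching: a matching covering every vertex. -/
def IsPerfectMatching (G : SimpleGraph V) (M : Finset (Sym2 V)) : Prop :=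
  IsMatching G M ∧ ∀ v : V, ∃ e ∈ M, v ∈ e

/-- The matching number `mat(G)`: the maximum size of a matching of `G`. -/
noncomputable def matchingNumber (G : SimpleGraph V) [Fintype V] : ℕ := by
  classical
  exact Finset.univ.powerset.sup fun M => if IsMatching G M then M.card else 0

/-- `T` is an independent set of `G`. -/
def IsIndepSet (G : SimpleGraph V) (T : Finset V) : Prop :=
  ∀ u ∈ T, ∀ v ∈ T, ¬ G.Adj u v

/-- The neighborhood `N_G(T)` of a set of vertices `T`. -/
noncomputable def nbrSet (G : SimpleGraph V) [Fintype V] (T : Finset V) : Finset V := by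
  classical
  exact Finset.univ.filter fun v => ∃ t ∈ T, G.Adj t v

/-- `G` is a Tutte-Berge graph: some independent set `T` satisfies
`|T| = |N_G(T)| + |V(G)| - 2 mat(G)` (written additively to avoid truncated subtraction). -/
noncomputable def TutteBerge (G : SimpleGraph V) [Fintype V] : Prop :=
  ∃ T : Finset V, IsIndepSet G T ∧
    T.card + 2 * matchingNumber G = (nbrSet G T).card + Fintype.card V

/-- `G` is factor-critical: deleting any vertex leaves a graph with a perfect matching. -/
def FactorCritical (G : SimpleGraph V) : Prop :=
  ∀ v : V, ∃ M, IsPerfectMatching (G.induce {x | x ≠ v}) M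

/-- The Gallai-Edmonds set `D(G)`: vertices missed by at least one maximum matching. -/
noncomputable def gallaiD (G : SimpleGraph V) [Fintype V] : Finset V := by
  classical
  exact Finset.univ.filter fun v =>
    ∃ M, IsMatching G M ∧ M.card = matchingNumber G ∧ ∀ e ∈ M, v ∉ e

/-- The cone `G*` over `G`: a new apex vertex (`none`) joined to every vertex of `G`. -/
def cone (G : SimpleGraph V) : SimpleGraph (Option V) :=
  SimpleGraph.fromRel fun a b =>
    a = none ∨ ∃ u v, a = some u ∧ b = some v ∧ G.Adj u v

/-- The edge polytope `P_H`: convex hull of the points `e_u + e_v` over edges `{u,v}` of `H`. -/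
noncomputable def edgePolytope (H : SimpleGraph W) : Set (W → ℝ) := by
  classical
  exact convexHull ℝ
    {x | ∃ u v, H.Adj u v ∧
      x = fun w => (if w = u then (1 : ℝ) else 0) + (if w = v then (1 : ℝ) else 0)}

/-- Every connected component of `H` contains an odd cycle. -/
def HasOddCycleComponents (H : SimpleGraph W) : Prop :=
  ∀ c : H.ConnectedComponent, ∃ u, u ∈ c.supp ∧ ∃ p : H.Walk u u, p.IsCycle ∧ Odd p.length

/-- The neighborhood of a set of vertices, as a set. -/
def nbrSetSet (H : SimpleGraph W) (T : Set W) : Set W := {w | ∃ t ∈ T, H.Adj t w}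

/-- The bipartite graph `B_H(T)` induced by `T`: vertex set `T ∪ N_H(T)`,
with the edges of `H` joining a vertex of `T` to a vertex of `N_H(T)`. -/
def inducedBipartite (H : SimpleGraph W) (T : Set W) :
    SimpleGraph ↥(T ∪ nbrSetSet H T) :=
  SimpleGraph.fromRel fun a b => (a : W) ∈ T ∧ H.Adj a b

/-- An independent set `T` is fundamental in `H` if `B_H(T)` is connected (trivially so
if empty) and, when `T ∪ N_H(T) ≠ V(H)`, each connected component of
`H \ (T ∪ N_H(T))` contains an odd cycle. -/
def Fundamental (H : SimpleGraph W) (T : Set W) : Prop :=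
  (∀ u ∈ T, ∀ v ∈ T, ¬ H.Adj u v) ∧
  (inducedBipartite H T).Preconnected ∧
  (T ∪ nbrSetSet H T ≠ Set.univ →
    HasOddCycleComponents (H.induce (T ∪ nbrSetSet H T)ᶜ))


/-- Helper: extract a matched partner from a perfect matching of `G \ w`. -/
lemma partner_spec {V : Type*} {G : SimpleGraph V} {w : V}
    {M : Finset (Sym2 ↥{x : V | x ≠ w})}
    (hM : IsPerfectMatching (G.induce {x : V | x ≠ w}) M)
    (x : V) (hx : x ≠ w) :
    ∃ y : V, G.Adj x y ∧ ∃ e ∈ M,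
      (⟨x, hx⟩ : ↥{x : V | x ≠ w}) ∈ e ∧ ∃ hy : y ≠ w,
        (⟨y, hy⟩ : ↥{x : V | x ≠ w}) ∈ e := by
  obtain ⟨e, heM, hxe⟩ := hM.2 ⟨x, hx⟩
  have hedge := hM.1.1 e heM
  induction e using Sym2.inductionOn with
  | hf a b =>
    rw [SimpleGraph.mem_edgeSet] at hedge
    have hadj : G.Adj (a : V) (b : V) := by
      simpa using hedge
    rw [Sym2.mem_iff] at hxe
    cases hxe with
    | inl h =>
      refine ⟨b.1, ?_, s(a, b), heM, by simp [h], b.2, by simp⟩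
      have : (a : V) = x := (congrArg Subtype.val h).symm
      rwa [this] at hadj
    | inr h =>
      refine ⟨a.1, ?_, s(a, b), heM, by simp [h], a.2, by simp⟩
      have : (b : V) = x := (congrArg Subtype.val h).symm
      rw [this] at hadj
      exact hadj.symm

/-- if `G` is factor-critical with more than one vertex, then every
independent set `T` satisfies `|T| ≤ |N_G(T)|`. -/
theorem factorCritical_indep_card_le {V : Type*} [Fintype V] (G : SimpleGraph V)
    (hfc : FactorCritical G) (hV : 1 < Fintype.card V)
    (T : Finset V) (hT : IsIndepSet G T) :
    T.card ≤ (nbrSet G T).card := by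
  classical
  rcases T.eq_empty_or_nonempty with rfl | ⟨t, ht⟩
  · simp
  -- find a vertex w adjacent to t; then w ∉ T
  obtain ⟨u, hu⟩ := Fintype.exists_ne_of_one_lt_card hV t
  obtain ⟨M1, hM1⟩ := hfc u
  obtain ⟨w, hw, -⟩ := partner_spec hM1 t hu.symm
  have hwT : w ∉ T := fun hwT => hT t ht w hwT hw
  -- perfect matching of G \ w
  obtain ⟨M, hM⟩ := hfc w
  -- choose partners for all elements of T
  have hne : ∀ x ∈ T, x ≠ w := fun x hx h => hwT (h ▸ hx)
  have hch : ∀ x : V, ∀ hx : x ∈ T, ∃ y : V, G.Adj x y ∧ ∃ e ∈ M,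
      (⟨x, hne x hx⟩ : ↥{z : V | z ≠ w}) ∈ e ∧ ∃ hy : y ≠ w,
        (⟨y, hy⟩ : ↥{z : V | z ≠ w}) ∈ e :=
    fun x hx => partner_spec hM x (hne x hx)
  choose p hadj e heM hxe hpne hpe using hch
  let f : V → V := fun x => if hx : x ∈ T then p x hx else x
  have hmaps : ∀ x ∈ T, f x ∈ nbrSet G T := by
    intro x hx
    simp only [f, dif_pos hx, nbrSet, Finset.mem_filter, Finset.mem_univ, true_and]
    exact ⟨x, hx, hadj x hx⟩
  have hinj : Set.InjOn f T := by
    intro x1 hx1' x2 hx2' hfeq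
    have hx1 : x1 ∈ T := hx1'
    have hx2 : x2 ∈ T := hx2'
    simp only [f, dif_pos hx1, dif_pos hx2] at hfeq
    -- the common partner
    by_cases hee : e x1 hx1 = e x2 hx2
    · -- both x1, x2 are in the same edge, along with the common partner
      have h1 := hxe x1 hx1
      have h2 := hxe x2 hx2
      have hp1 := hpe x1 hx1
      have hp2 := hpe x2 hx2
      rw [hee] at h1 hp1
      have hpsub : (⟨p x1 hx1, hpne x1 hx1⟩ : ↥{z : V | z ≠ w}) =
          ⟨p x2 hx2, hpne x2 hx2⟩ := Subtype.ext hfeq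
      rw [hpsub] at hp1
      -- work in the edge e x2 hx2
      set E := e x2 hx2 with hE
      clear_value E
      induction E using Sym2.inductionOn with
      | hf a b =>
        rw [Sym2.mem_iff] at h1 h2 hp2
        have hne1 : (⟨x1, hne x1 hx1⟩ : ↥{z : V | z ≠ w}) ≠
            ⟨p x2 hx2, hpne x2 hx2⟩ := by
          intro h
          have : x1 = p x2 hx2 := congrArg Subtype.val h
          rw [← hfeq] at this
          exact (G.ne_of_adj (hadj x1 hx1)) this
        have hne2 : (⟨x2, hne x2 hx2⟩ : ↥{z : V | z ≠ w}) ≠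
            ⟨p x2 hx2, hpne x2 hx2⟩ := by
          intro h
          exact (G.ne_of_adj (hadj x2 hx2)) (congrArg Subtype.val h)
        rcases hp2 with hp | hp
        · have e1 := h1.resolve_left (fun h => hne1 (h.trans hp.symm))
          have e2 := h2.resolve_left (fun h => hne2 (h.trans hp.symm))
          exact congrArg Subtype.val (e1.trans e2.symm)
        · have e1 := h1.resolve_right (fun h => hne1 (h.trans hp.symm))
          have e2 := h2.resolve_right (fun h => hne2 (h.trans hp.symm))
          exact congrArg Subtype.val (e1.trans e2.symm)
    · exfalso
      have hdisj := hM.1.2 _ (heM x1 hx1) _ (heM x2 hx2) hee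
        ⟨p x1 hx1, hpne x1 hx1⟩ (hpe x1 hx1)
      apply hdisj
      have hpsub : (⟨p x1 hx1, hpne x1 hx1⟩ : ↥{z : V | z ≠ w}) =
          ⟨p x2 hx2, hpne x2 hx2⟩ := Subtype.ext hfeq
      rw [hpsub]
      exact hpe x2 hx2
  exact Finset.card_le_card_of_injOn f hmaps hinj

end TB
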